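/- If the trust-region decrease ratio satisfies |ρ_k − 1| ≤ C‖η_k‖^{1+ν} / min{Δ_k, ε/β} whenever ‖grad φ(x_k)‖ ≥ ε and ‖η_k‖ ≤ Δ_k ≤ Δ̄, then there exists Δ̃ > 0 (namely Δ̃ = min{ε/β, (2C)^{-1/ν}}) such that Δ_k ≤ Δ̃ implies ρ_k ≥ 1/2, and consequently under the standard radius update rule (Δ_{k+1} = Δ_k/4 if ρ_k < 1/4, Δ_{k+1} ≥ Δ_k otherwise) the trust-region radii are bounded below by min{Δ_K, Δ̃/4} for all k ≥ K. -/

import Mathlib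

/-- lower bound on the trust-region radii.  If
`|ρ k − 1| ≤ C ‖η k‖^(1+ν) / min{Δ k, ε/β}` whenever `‖grad φ(x k)‖ ≥ ε` (here `gk k`
denotes `‖grad φ(x k)‖` and `ηn k` denotes `‖η k‖ ≤ Δ k ≤ Δbar`), then with
`Δt = min{ε/β, (2C)^(-1/ν)}` one has: `Δ k ≤ Δt` implies `ρ k ≥ 1/2`, and under the
standard radius update rule the radii satisfy `Δ k ≥ min{Δ K, Δt/4}` for `k ≥ K`
provided the gradient norms stay `≥ ε` from `K` on. -/
theorem stmt_16
    (C ε β ν Δbar : ℝ) (hC : 0 < C) (hε : 0 < ε) (hβ : 0 < β) (hν : 0 < ν)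
    (hΔbar : 0 < Δbar)
    (ρ Δ gk ηn : ℕ → ℝ)
    (hΔpos : ∀ k, 0 < Δ k ∧ Δ k ≤ Δbar)
    (hηΔ : ∀ k, 0 ≤ ηn k ∧ ηn k ≤ Δ k)
    (hratio : ∀ k, ε ≤ gk k →
      |ρ k - 1| ≤ C * ηn k ^ (1 + ν) / min (Δ k) (ε / β))
    (hupdate : ∀ k, (ρ k < 1/4 → Δ (k+1) = Δ k / 4) ∧ (¬ ρ k < 1/4 → Δ k ≤ Δ (k+1))) :
    ∃ Δt > 0, Δt = min (ε / β) ((2 * C) ^ (-(1/ν))) ∧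
      (∀ k, ε ≤ gk k → Δ k ≤ Δt → (1:ℝ)/2 ≤ ρ k) ∧
      (∀ K : ℕ, (∀ k ≥ K, ε ≤ gk k) → ∀ k ≥ K, min (Δ K) (Δt / 4) ≤ Δ k) := by
  set Δt : ℝ := min (ε / β) ((2 * C) ^ (-(1/ν))) with hΔt
  have h2C : (0:ℝ) < 2 * C := by linarith
  have hΔt_pos : 0 < Δt :=
    lt_min (div_pos hε hβ) (Real.rpow_pos_of_pos h2C _)
  have key : ∀ k, ε ≤ gk k → Δ k ≤ Δt → (1:ℝ)/2 ≤ ρ k := by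
    intro k hg hle
    have hΔk := (hΔpos k).1
    have hmin : min (Δ k) (ε / β) = Δ k :=
      min_eq_left (hle.trans (min_le_left _ _))
    have hb := hratio k hg
    rw [hmin] at hb
    -- ηn k ^ (1+ν) ≤ Δ k ^ (1+ν) = Δ k * Δ k ^ ν
    have hη0 := (hηΔ k).1
    have hηle := (hηΔ k).2
    have h1 : ηn k ^ (1 + ν) ≤ Δ k ^ (1 + ν) :=
      Real.rpow_le_rpow hη0 hηle (by linarith)
    have h2 : Δ k ^ (1 + ν) = Δ k * Δ k ^ ν := by
      rw [Real.rpow_add hΔk, Real.rpow_one]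
    have h3 : Δ k ^ ν ≤ (2 * C)⁻¹ := by
      have hle2 : Δ k ≤ (2 * C) ^ (-(1/ν)) := hle.trans (min_le_right _ _)
      have := Real.rpow_le_rpow hΔk.le hle2 hν.le
      rwa [← Real.rpow_mul h2C.le, neg_mul, one_div,
        inv_mul_cancel₀ hν.ne', Real.rpow_neg_one] at this
    have hb2 : C * ηn k ^ (1 + ν) / Δ k ≤ C * Δ k ^ ν := by
      rw [div_le_iff₀ hΔk]
      calc C * ηn k ^ (1 + ν) ≤ C * (Δ k * Δ k ^ ν) := by
            rw [← h2]; exact mul_le_mul_of_nonneg_left h1 hC.le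
        _ = C * Δ k ^ ν * Δ k := by ring
    have hb3 : |ρ k - 1| ≤ 1/2 := by
      have : C * Δ k ^ ν ≤ C * (2 * C)⁻¹ := mul_le_mul_of_nonneg_left h3 hC.le
      have hc : C * (2 * C)⁻¹ = 1/2 := by field_simp
      linarith [hb, hb2]
    have := abs_le.mp hb3
    linarith [this.1]
  refine ⟨Δt, hΔt_pos, rfl, key, ?_⟩
  intro K hgK k hk
  induction k, hk using Nat.le_induction with
  | base => exact min_le_left _ _
  | succ n hn ih =>
    by_cases hρ : ρ n < 1/4
    · have hΔn : Δt < Δ n := by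
        by_contra h
        push_neg at h
        have := key n (hgK n hn) h
        linarith
      have heq := (hupdate n).1 hρ
      rw [heq]
      have : Δt / 4 ≤ Δ n / 4 := by linarith
      exact le_trans (min_le_right _ _) this
    · exact ih.trans ((hupdate n).2 hρ)
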